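/- Let G ∈ F(u_1,…,u_n) be symmetric, i.e. G(u_{σ(1)},…,u_{σ(n)}) = G(u_1,…,u_n) for all σ ∈ S_n. Then (1/n!) · Sym_u( ϖ(u)⁻¹ · G ) = (1/[n]_q!) · Sym_u( G ), where [n]_q = (qⁿ − q⁻ⁿ)/(q − q⁻¹) and [n]_q! = [1]_q·[2]_q⋯[n]_q. -/

import Mathlib

set_option synthInstance.maxHeartbeats 1000000
set_option maxHeartbeats 1000000
open scoped BigOperators
open MvPolynomial

noncomputable section

/-- The base field `F = ℂ(q)`. -/
abbrev F0 : Type := RatFunc ℂ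

/-- The field of rational functions `F(u₁,…,uₙ)`. -/
abbrev Kn (n : ℕ) : Type := FractionRing (MvPolynomial (Fin n) F0)

/-- The element `q` of `F(u₁,…,uₙ)`. -/
def qK (n : ℕ) : Kn n := algebraMap (MvPolynomial (Fin n) F0) (Kn n) (C RatFunc.X)

/-- The variable `uᵢ` as an element of `F(u₁,…,uₙ)`. -/
def uvar (n : ℕ) (i : Fin n) : Kn n := algebraMap (MvPolynomial (Fin n) F0) (Kn n) (X i)

/-- The substitution automorphism `G(u) ↦ G(^σu)`, i.e. `u_i ↦ u_{σ(i)}`. -/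
def act {n : ℕ} (σ : Equiv.Perm (Fin n)) : Kn n ≃+* Kn n :=
  IsFractionRing.ringEquivOfRingEquiv (MvPolynomial.renameEquiv F0 σ).toRingEquiv

/-- The cocycle `c_σ(u)`, a product over the inversions of `σ`. -/
def coc {n : ℕ} (σ : Equiv.Perm (Fin n)) : Kn n :=
  ∏ p ∈ Finset.univ.filter (fun p : Fin n × Fin n => p.1 < p.2 ∧ σ p.2 < σ p.1),
    (qK n * uvar n (σ p.2) - (qK n)⁻¹ * uvar n (σ p.1)) /
      ((qK n)⁻¹ * uvar n (σ p.2) - qK n * uvar n (σ p.1))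

/-- The map `π(σ) : G ↦ c_σ(u)·G(^σu)`. -/
def piAct {n : ℕ} (σ : Equiv.Perm (Fin n)) (G : Kn n) : Kn n := coc σ * act σ G

/-- The q-symmetrization `Sym_u(G) = Σ_{σ∈S_n} c_σ(u)·G(^σu)`. -/
def symQ {n : ℕ} (G : Kn n) : Kn n := ∑ σ : Equiv.Perm (Fin n), piAct σ G

/-- The function `ϖ(u) = ∏_{k<k′} (q⁻¹·u_k − q·u_{k′})/(u_k − u_{k′})`. -/
def varpi (n : ℕ) : Kn n :=
  ∏ p ∈ Finset.univ.filter (fun p : Fin n × Fin n => p.1 < p.2),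
    ((qK n)⁻¹ * uvar n p.1 - qK n * uvar n p.2) / (uvar n p.1 - uvar n p.2)

/-- The q-number `[k]_q = (q^k − q^{−k})/(q − q⁻¹)` as an element of `F(u₁,…,uₙ)`. -/
def qNum (n k : ℕ) : Kn n := ((qK n) ^ k - ((qK n)⁻¹) ^ k) / (qK n - (qK n)⁻¹)

/-- The q-factorial `[k]_q! = [1]_q·[2]_q⋯[k]_q`. -/
def qFact (n k : ℕ) : Kn n := ∏ i ∈ Finset.range k, qNum n (i + 1)

namespace Aux
variable {N : ℕ}

lemma am_inj : Function.Injective (algebraMap (MvPolynomial (Fin N) F0) (Kn N)) :=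
  IsFractionRing.injective _ _

lemma act_algebraMap (σ : Equiv.Perm (Fin N)) (P : MvPolynomial (Fin N) F0) :
    act σ (algebraMap _ (Kn N) P) = algebraMap _ (Kn N) (rename σ P) := by
  simp [act]

lemma act_q (σ : Equiv.Perm (Fin N)) : act σ (qK N) = qK N := by
  rw [qK, act_algebraMap]; simp

lemma act_u (σ : Equiv.Perm (Fin N)) (i : Fin N) : act σ (uvar N i) = uvar N (σ i) := by
  rw [uvar, act_algebraMap, uvar]; simp

/-- generic nonzeroness -/
lemma key_ne (a b : Fin N) (hab : a ≠ b) (s : F0) :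
    uvar N a - algebraMap (MvPolynomial (Fin N) F0) (Kn N) (C s) * uvar N b ≠ 0 := by
  rw [uvar, uvar, ← map_mul, ← map_sub]
  intro h
  have h0 : (X a - C s * X b : MvPolynomial (Fin N) F0) = 0 := by
    apply am_inj; rw [h, map_zero]
  have := congrArg (MvPolynomial.coeff (Finsupp.single a 1)) h0
  simp [coeff_X', coeff_C_mul, Finsupp.single_left_inj (one_ne_zero (α := ℕ)), hab,
    (Ne.symm hab)] at this

lemma q_ne : (qK N) ≠ 0 := by
  rw [qK]; intro h
  have h0 : (C RatFunc.X : MvPolynomial (Fin N) F0) = 0 := by apply am_inj; rw [h, map_zero]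
  simp [RatFunc.X_ne_zero] at h0

lemma u_ne (a : Fin N) : uvar N a ≠ 0 := by
  rw [uvar]; intro h
  have h0 : (X a : MvPolynomial (Fin N) F0) = 0 := by apply am_inj; rw [h, map_zero]
  exact MvPolynomial.X_ne_zero a h0

lemma uu_ne {a b : Fin N} (hab : a ≠ b) : uvar N a - uvar N b ≠ 0 := by
  have := key_ne a b hab 1
  simpa using this

lemma qsq : (qK N) ^ 2 = algebraMap (MvPolynomial (Fin N) F0) (Kn N) (C (RatFunc.X ^ 2)) := by
  rw [qK, map_pow, map_pow]

lemma qinvu_ne {a b : Fin N} (hab : a ≠ b) : (qK N)⁻¹ * uvar N a - qK N * uvar N b ≠ 0 := by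
  have h2 : uvar N a - (qK N) ^ 2 * uvar N b ≠ 0 := by
    rw [qsq]; exact key_ne a b hab _
  have he : (qK N)⁻¹ * (uvar N a - (qK N) ^ 2 * uvar N b)
      = (qK N)⁻¹ * uvar N a - qK N * uvar N b := by
    rw [mul_sub, ← mul_assoc, sq, ← mul_assoc, inv_mul_cancel₀ q_ne, one_mul]
  rw [← he]
  exact mul_ne_zero (inv_ne_zero q_ne) h2

lemma qu_ne {a b : Fin N} (hab : a ≠ b) : qK N * uvar N a - (qK N)⁻¹ * uvar N b ≠ 0 := by
  have := qinvu_ne (Ne.symm hab)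
  intro h
  apply this
  have : (qK N)⁻¹ * uvar N b - qK N * uvar N a = -(qK N * uvar N a - (qK N)⁻¹ * uvar N b) := by
    ring
  rw [this, h, neg_zero]

/-- the basic factor -/
def ff (a b : Fin N) : Kn N :=
  ((qK N)⁻¹ * uvar N a - qK N * uvar N b) / (uvar N a - uvar N b)

/-- the cocycle factor -/
def gg (a b : Fin N) : Kn N :=
  (qK N * uvar N a - (qK N)⁻¹ * uvar N b) / ((qK N)⁻¹ * uvar N a - qK N * uvar N b)

lemma ff_ne {a b : Fin N} (hab : a ≠ b) : ff a b ≠ 0 :=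
  div_ne_zero (qinvu_ne hab) (uu_ne hab)

lemma gg_ne {a b : Fin N} (hab : a ≠ b) : gg a b ≠ 0 :=
  div_ne_zero (qu_ne hab) (qinvu_ne hab)

lemma ff_swap {a b : Fin N} (hab : a ≠ b) : ff b a = gg a b * ff a b := by
  rw [ff, ff, gg, div_mul_div_comm]
  rw [div_eq_div_iff (uu_ne (Ne.symm hab)) (mul_ne_zero (qinvu_ne hab) (uu_ne hab))]
  ring

/-- the set of ordered pairs -/
def pairs (n : ℕ) : Finset (Fin n × Fin n) :=
  Finset.univ.filter (fun p : Fin n × Fin n => p.1 < p.2)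

lemma varpi_eq : varpi N = ∏ p ∈ pairs N, ff p.1 p.2 := rfl

lemma act_varpi_eq (σ : Equiv.Perm (Fin N)) :
    act σ (varpi N) = ∏ p ∈ pairs N, ff (σ p.1) (σ p.2) := by
  rw [varpi_eq, map_prod]
  refine Finset.prod_congr rfl fun p _ => ?_
  simp only [ff, map_div₀, map_sub, map_mul, map_inv₀, act_q, act_u]

lemma coc_eq (σ : Equiv.Perm (Fin N)) :
    coc σ = ∏ p ∈ (pairs N).filter (fun p => σ p.2 < σ p.1), gg (σ p.2) (σ p.1) := by
  rw [coc, pairs, Finset.filter_filter]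
  rfl


/-- sorting map on pairs -/
def sp (σ : Equiv.Perm (Fin N)) (p : Fin N × Fin N) : Fin N × Fin N :=
  if σ p.1 < σ p.2 then (σ p.1, σ p.2) else (σ p.2, σ p.1)

lemma prod_sp (σ : Equiv.Perm (Fin N)) (g : Fin N × Fin N → Kn N) :
    ∏ p ∈ pairs N, g (sp σ p) = ∏ p ∈ pairs N, g p := by
  classical
  refine Finset.prod_nbij' (sp σ) (sp σ⁻¹) ?_ ?_ ?_ ?_ ?_
  · intro p hp
    rw [pairs, Finset.mem_filter] at hp ⊢
    refine ⟨Finset.mem_univ _, ?_⟩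
    rw [sp]
    rcases lt_or_gt_of_ne (fun h => absurd (σ.injective h) (ne_of_lt hp.2)) with h | h
    · rw [if_pos h]; exact h
    · rw [if_neg (not_lt.mpr (le_of_lt h))]; exact h
  · intro p hp
    rw [pairs, Finset.mem_filter] at hp ⊢
    refine ⟨Finset.mem_univ _, ?_⟩
    rw [sp]
    rcases lt_or_gt_of_ne (fun h => absurd (σ⁻¹.injective h) (ne_of_lt hp.2)) with h | h
    · rw [if_pos h]; exact h
    · rw [if_neg (not_lt.mpr (le_of_lt h))]; exact h
  · intro p hp
    rw [pairs, Finset.mem_filter] at hp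
    rcases lt_or_gt_of_ne (fun h => absurd (σ.injective h) (ne_of_lt hp.2)) with h | h
    · rw [show sp σ p = (σ p.1, σ p.2) from if_pos h, sp]
      simp only [Equiv.Perm.inv_def, Equiv.symm_apply_apply]
      rw [if_pos hp.2]
    · rw [show sp σ p = (σ p.2, σ p.1) from if_neg (not_lt.mpr (le_of_lt h)), sp]
      simp only [Equiv.Perm.inv_def, Equiv.symm_apply_apply]
      rw [if_neg (not_lt.mpr (le_of_lt hp.2))]
  · intro p hp
    rw [pairs, Finset.mem_filter] at hp
    rcases lt_or_gt_of_ne (fun h => absurd (σ⁻¹.injective h) (ne_of_lt hp.2)) with h | h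
    · rw [show sp σ⁻¹ p = (σ⁻¹ p.1, σ⁻¹ p.2) from if_pos h, sp]
      simp only [Equiv.Perm.inv_def, Equiv.apply_symm_apply]
      rw [if_pos hp.2]
    · rw [show sp σ⁻¹ p = (σ⁻¹ p.2, σ⁻¹ p.1) from if_neg (not_lt.mpr (le_of_lt h)), sp]
      simp only [Equiv.Perm.inv_def, Equiv.apply_symm_apply]
      rw [if_neg (not_lt.mpr (le_of_lt hp.2))]
  · intro p hp
    rfl

/-- Lemma A -/
lemma act_varpi (σ : Equiv.Perm (Fin N)) : act σ (varpi N) = coc σ * varpi N := by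
  classical
  rw [act_varpi_eq, coc_eq]
  rw [← Finset.prod_filter_mul_prod_filter_not (pairs N) (fun p => σ p.2 < σ p.1)
    (fun p => ff (σ p.1) (σ p.2))]
  have h1 : ∏ p ∈ (pairs N).filter (fun p => σ p.2 < σ p.1), ff (σ p.1) (σ p.2)
      = ∏ p ∈ (pairs N).filter (fun p => σ p.2 < σ p.1),
          (gg (σ p.2) (σ p.1) * ff (σ p.2) (σ p.1)) := by
    refine Finset.prod_congr rfl fun p hp => ?_
    rw [Finset.mem_filter] at hp
    exact ff_swap (ne_of_lt hp.2)
  rw [h1, Finset.prod_mul_distrib, mul_assoc]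
  congr 1
  have e1 : ∏ p ∈ (pairs N).filter (fun p => σ p.2 < σ p.1), ff (σ p.2) (σ p.1)
      = ∏ p ∈ (pairs N).filter (fun p => σ p.2 < σ p.1),
          (fun r : Fin N × Fin N => ff r.1 r.2) (sp σ p) := by
    refine Finset.prod_congr rfl fun p hp => ?_
    rw [Finset.mem_filter] at hp
    rw [sp, if_neg (not_lt.mpr (le_of_lt hp.2))]
  have e2 : ∏ p ∈ (pairs N).filter (fun p => ¬ σ p.2 < σ p.1), ff (σ p.1) (σ p.2)
      = ∏ p ∈ (pairs N).filter (fun p => ¬ σ p.2 < σ p.1),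
          (fun r : Fin N × Fin N => ff r.1 r.2) (sp σ p) := by
    refine Finset.prod_congr rfl fun p hp => ?_
    rw [Finset.mem_filter, pairs, Finset.mem_filter] at hp
    have hlt : σ p.1 < σ p.2 :=
      lt_of_le_of_ne (not_lt.mp hp.2) (fun h => absurd (σ.injective h) (ne_of_lt hp.1.2))
    rw [sp, if_pos hlt]
  rw [e1, e2, Finset.prod_filter_mul_prod_filter_not (pairs N) (fun p => σ p.2 < σ p.1),
    prod_sp σ (fun r => ff r.1 r.2), varpi_eq]


lemma qmap_pow (m : ℕ) :
    (qK N) ^ m = algebraMap (MvPolynomial (Fin N) F0) (Kn N) (C (RatFunc.X ^ m)) := by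
  rw [qK, map_pow, map_pow]

lemma qpow_ne (k : ℕ) : (qK N) ^ (k+1) - ((qK N)⁻¹) ^ (k+1) ≠ 0 := by
  have hX : (RatFunc.X ^ (2*(k+1)) - 1 : F0) ≠ 0 := by
    intro h
    have h2 : (Polynomial.X ^ (2*(k+1)) - 1 : Polynomial ℂ) = 0 := by
      apply RatFunc.algebraMap_injective ℂ
      rw [map_sub, map_pow, map_one, RatFunc.algebraMap_X, h, map_zero]
    have := congrArg Polynomial.natDegree (sub_eq_zero.mp h2)
    simp at this
  have h2 : (qK N) ^ (2*(k+1)) - 1 ≠ 0 := by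
    intro h
    apply hX
    have h3 : algebraMap (MvPolynomial (Fin N) F0) (Kn N) (C (RatFunc.X ^ (2*(k+1)) - 1)) = 0 := by
      rw [map_sub, map_one, map_sub, map_one, ← qmap_pow]
      exact h
    have h4 : (C (RatFunc.X ^ (2*(k+1)) - 1) : MvPolynomial (Fin N) F0) = 0 :=
      am_inj (by rw [map_zero]; exact h3)
    apply MvPolynomial.C_injective (Fin N) F0
    rw [map_zero]
    exact h4
  have e1 : ((qK N)⁻¹) ^ (k+1) = ((qK N) ^ (k+1))⁻¹ := inv_pow _ _
  have e2 : (qK N) ^ (2*(k+1)) = (qK N)^(k+1) * (qK N)^(k+1) := by rw [two_mul, pow_add]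
  have he : ((qK N)⁻¹) ^ (k+1) * ((qK N) ^ (2*(k+1)) - 1)
      = (qK N) ^ (k+1) - ((qK N)⁻¹) ^ (k+1) := by
    rw [e1, e2, mul_sub, mul_one, inv_mul_cancel_left₀ (pow_ne_zero _ q_ne)]
  rw [← he]
  exact mul_ne_zero (pow_ne_zero _ (inv_ne_zero q_ne)) h2

lemma qsub_ne : qK N - (qK N)⁻¹ ≠ 0 := by
  have := qpow_ne (N := N) 0
  simpa using this

lemma qNum_ne (k : ℕ) : qNum N (k+1) ≠ 0 :=
  div_ne_zero (qpow_ne k) qsub_ne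

lemma qFact_ne (k : ℕ) : qFact N k ≠ 0 := by
  rw [qFact]
  exact Finset.prod_ne_zero_iff.mpr (fun i _ => qNum_ne i)

instance : CharZero F0 :=
  charZero_of_injective_algebraMap (algebraMap ℂ F0).injective

instance : CharZero (MvPolynomial (Fin N) F0) := by
  refine charZero_of_injective_algebraMap (R := F0) ?_
  rw [MvPolynomial.algebraMap_eq]
  exact MvPolynomial.C_injective _ _

instance : CharZero (Kn N) :=
  charZero_of_injective_algebraMap (am_inj (N := N))

/-- The key partial-fraction identity (★). -/
lemma star (k : ℕ) (E : Fin (k+1) ↪ Fin N) :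
    ∑ p : Fin (k+1), ∏ m ∈ Finset.univ.erase p, ff (E p) (E m) = qNum N (k+1) := by
  classical
  set q : Kn N := qK N with hq
  set y : Fin (k+1) → Kn N := fun p => uvar N (E p) with hy
  have hEne : ∀ {p m : Fin (k+1)}, p ≠ m → E p ≠ E m := fun h hc => h (E.injective hc)
  have hyne : ∀ {p m : Fin (k+1)}, p ≠ m → y p - y m ≠ 0 := fun h => uu_ne (hEne h)
  set t : Fin (k+1) → Kn N := fun p => ∏ m ∈ Finset.univ.erase p, ff (E p) (E m) with ht
  have hffnum : ∀ (p m : Fin (k+1)), m ≠ p →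
      ff (E p) (E m) * (y p - y m) = q⁻¹ * y p - q * y m := fun p m hm =>
    div_mul_cancel₀ _ (hyne (Ne.symm hm))
  set L : Polynomial (Kn N) :=
    ∏ m : Fin (k+1), (Polynomial.C q⁻¹ * Polynomial.X - Polynomial.C (q * y m)) with hL
  set R : Polynomial (Kn N) :=
    Polynomial.C (q^(k+1)) * ∏ m : Fin (k+1), (Polynomial.X - Polynomial.C (y m)) +
      ∑ p : Fin (k+1), Polynomial.C ((q⁻¹ - q) * t p) *
        (Polynomial.X * ∏ m ∈ Finset.univ.erase p, (Polynomial.X - Polynomial.C (y m))) with hR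
  -- L = R
  have main : L = R := by
    rw [← sub_eq_zero]
    apply Polynomial.eq_zero_of_natDegree_lt_card_of_eval_eq_zero (L - R)
      (f := Fin.cases (0 : Kn N) y)
    · -- injectivity
      intro a b hab
      induction a using Fin.cases with
      | zero =>
        induction b using Fin.cases with
        | zero => rfl
        | succ j =>
          simp only [Fin.cases_zero, Fin.cases_succ] at hab
          exact absurd hab.symm (u_ne (E j))
      | succ i =>
        induction b using Fin.cases with
        | zero =>
          simp only [Fin.cases_zero, Fin.cases_succ] at hab
          exact absurd hab (u_ne (E i))
        | succ j =>
          simp only [Fin.cases_succ] at hab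
          by_contra hne
          have hij : i ≠ j := fun h => hne (by rw [h])
          exact hyne hij (sub_eq_zero.mpr hab)
    · -- evaluations
      intro i
      rw [Polynomial.eval_sub, hL, hR, sub_eq_zero]
      induction i using Fin.cases with
      | zero =>
        simp only [Fin.cases_zero, Polynomial.eval_sub, Polynomial.eval_add, Polynomial.eval_mul,
          Polynomial.eval_finset_sum, Polynomial.eval_prod, Polynomial.eval_C, Polynomial.eval_X,
          mul_zero, zero_mul, zero_sub, Finset.sum_const_zero, add_zero]
        calc ∏ m : Fin (k+1), -(q * y m)
            = ∏ m : Fin (k+1), q * (-(y m)) := Finset.prod_congr rfl (fun m _ => by ring)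
          _ = (∏ _m : Fin (k+1), q) * ∏ m : Fin (k+1), -(y m) := Finset.prod_mul_distrib
          _ = q^(k+1) * ∏ m : Fin (k+1), -(y m) := by
              rw [Finset.prod_const, Finset.card_univ, Fintype.card_fin]
      | succ p =>
        simp only [Fin.cases_succ, Polynomial.eval_sub, Polynomial.eval_add, Polynomial.eval_mul,
          Polynomial.eval_finset_sum, Polynomial.eval_prod, Polynomial.eval_C, Polynomial.eval_X]
        rw [show (∏ m : Fin (k+1), (y p - y m)) = 0 from
          Finset.prod_eq_zero (Finset.mem_univ p) (sub_self (y p)), mul_zero, zero_add]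
        rw [Finset.sum_eq_single p ?h0 ?h1]
        case h0 =>
          intro b _ hbp
          rw [Finset.prod_eq_zero (Finset.mem_erase.mpr ⟨Ne.symm hbp, Finset.mem_univ p⟩)
            (sub_self (y p)), mul_zero, mul_zero]
        case h1 => intro h; exact absurd (Finset.mem_univ p) h
        rw [← Finset.mul_prod_erase Finset.univ _ (Finset.mem_univ p)]
        have htp : t p * ∏ m ∈ Finset.univ.erase p, (y p - y m)
            = ∏ m ∈ Finset.univ.erase p, (q⁻¹ * y p - q * y m) := by
          rw [ht]
          simp only
          rw [← Finset.prod_mul_distrib]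
          exact Finset.prod_congr rfl fun m hm => hffnum p m (Finset.mem_erase.mp hm).1
        rw [← htp]
        ring
    · -- degree
      have hone : ∀ (c : Kn N), (Polynomial.X - Polynomial.C c).natDegree ≤ 1 :=
        fun c => Polynomial.natDegree_X_sub_C_le c
      have hdL : L.natDegree ≤ k+1 := by
        refine le_trans (Polynomial.natDegree_prod_le _ _) ?_
        refine le_trans (Finset.sum_le_card_nsmul _ _ 1 ?_) (by simp)
        intro m _
        refine le_trans (Polynomial.natDegree_sub_le _ _) (max_le ?_ ?_)
        · exact le_trans (Polynomial.natDegree_C_mul_le _ _) Polynomial.natDegree_X_le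
        · exact le_of_eq_of_le (Polynomial.natDegree_C _) (by omega)
      have hprod1 : (∏ m : Fin (k+1), (Polynomial.X - Polynomial.C (y m))).natDegree ≤ k+1 := by
        refine le_trans (Polynomial.natDegree_prod_le _ _) ?_
        refine le_trans (Finset.sum_le_card_nsmul _ _ 1 (fun m _ => hone (y m))) (by simp)
      have hdR : R.natDegree ≤ k+1 := by
        refine le_trans (Polynomial.natDegree_add_le _ _) (max_le ?_ ?_)
        · exact le_trans (Polynomial.natDegree_C_mul_le _ _) hprod1
        · refine le_trans (Polynomial.natDegree_sum_le_of_forall_le _ _ ?_) le_rfl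
          intro p _
          refine le_trans (Polynomial.natDegree_C_mul_le _ _) ?_
          refine le_trans (Polynomial.natDegree_mul_le) ?_
          have : (∏ m ∈ Finset.univ.erase p, (Polynomial.X - Polynomial.C (y m))).natDegree ≤ k := by
            refine le_trans (Polynomial.natDegree_prod_le _ _) ?_
            refine le_trans (Finset.sum_le_card_nsmul _ _ 1 (fun m _ => hone (y m))) ?_
            simp [Finset.card_erase_of_mem]
          calc Polynomial.X.natDegree +
              (∏ m ∈ Finset.univ.erase p, (Polynomial.X - Polynomial.C (y m))).natDegree
              ≤ 1 + k := add_le_add Polynomial.natDegree_X_le this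
            _ = k + 1 := by omega
      refine lt_of_le_of_lt (le_trans (Polynomial.natDegree_sub_le _ _) (max_le hdL hdR)) ?_
      simp
  -- extract the coefficient of X^(k+1)
  have hq2 : q⁻¹ * q^2 = q := by rw [sq, ← mul_assoc, inv_mul_cancel₀ q_ne, one_mul]
  have hLfac : L = Polynomial.C (q⁻¹^(k+1)) *
      ∏ m : Fin (k+1), (Polynomial.X - Polynomial.C (q^2 * y m)) := by
    rw [hL]
    have hfac : ∀ m : Fin (k+1), Polynomial.C q⁻¹ * Polynomial.X - Polynomial.C (q * y m)
        = Polynomial.C q⁻¹ * (Polynomial.X - Polynomial.C (q^2 * y m)) := by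
      intro m
      rw [mul_sub, ← Polynomial.C_mul, ← mul_assoc, hq2]
    rw [Finset.prod_congr rfl (fun m _ => hfac m), Finset.prod_mul_distrib,
      Finset.prod_const, Finset.card_univ, Fintype.card_fin, ← Polynomial.C_pow]
  have monthing : ∀ (s : Finset (Fin (k+1))) (z : Fin (k+1) → Kn N),
      (∏ m ∈ s, (Polynomial.X - Polynomial.C (z m))).coeff s.card = 1 := by
    intro s z
    have hmon : (∏ m ∈ s, (Polynomial.X - Polynomial.C (z m))).Monic :=
      Polynomial.monic_prod_of_monic _ _ (fun m _ => Polynomial.monic_X_sub_C _)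
    have hdeg : (∏ m ∈ s, (Polynomial.X - Polynomial.C (z m))).natDegree = s.card := by
      rw [Polynomial.natDegree_prod_of_monic _ _ (fun m _ => Polynomial.monic_X_sub_C _)]
      simp [Polynomial.natDegree_X_sub_C]
    rw [← hdeg]
    exact hmon.coeff_natDegree
  have lcoeff : L.coeff (k+1) = q⁻¹^(k+1) := by
    rw [hLfac, Polynomial.coeff_C_mul]
    have := monthing Finset.univ (fun m => q^2 * y m)
    rw [Finset.card_univ, Fintype.card_fin] at this
    rw [this, mul_one]
  have rcoeff : R.coeff (k+1) = q^(k+1) + (q⁻¹ - q) * ∑ p : Fin (k+1), t p := by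
    rw [hR, Polynomial.coeff_add, Polynomial.coeff_C_mul]
    have h1 := monthing Finset.univ (fun m => y m)
    rw [Finset.card_univ, Fintype.card_fin] at h1
    rw [h1, mul_one]
    congr 1
    rw [Polynomial.finset_sum_coeff]
    have h2 : ∀ p : Fin (k+1),
        (Polynomial.C ((q⁻¹ - q) * t p) *
          (Polynomial.X * ∏ m ∈ Finset.univ.erase p, (Polynomial.X - Polynomial.C (y m)))).coeff (k+1)
        = (q⁻¹ - q) * t p := by
      intro p
      rw [Polynomial.coeff_C_mul]
      have hmon : (Polynomial.X * ∏ m ∈ Finset.univ.erase p,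
          (Polynomial.X - Polynomial.C (y m))).Monic :=
        Polynomial.monic_X.mul
          (Polynomial.monic_prod_of_monic _ _ (fun m _ => Polynomial.monic_X_sub_C _))
      have hdeg : (Polynomial.X * ∏ m ∈ Finset.univ.erase p,
          (Polynomial.X - Polynomial.C (y m))).natDegree = k+1 := by
        rw [Polynomial.Monic.natDegree_mul Polynomial.monic_X
          (Polynomial.monic_prod_of_monic _ _ (fun m _ => Polynomial.monic_X_sub_C _)),
          Polynomial.natDegree_X,
          Polynomial.natDegree_prod_of_monic _ _ (fun m _ => Polynomial.monic_X_sub_C _)]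
        simp [Polynomial.natDegree_X_sub_C, Finset.card_erase_of_mem]
        omega
      have : (Polynomial.X * ∏ m ∈ Finset.univ.erase p,
          (Polynomial.X - Polynomial.C (y m))).coeff (k+1) = 1 := by
        have h3 := hmon.coeff_natDegree
        rw [hdeg] at h3
        exact h3
      rw [this, mul_one]
    rw [Finset.sum_congr rfl (fun p _ => h2 p), ← Finset.mul_sum]
  have hcoeff : q⁻¹^(k+1) = q^(k+1) + (q⁻¹ - q) * ∑ p : Fin (k+1), t p := by
    rw [← lcoeff, ← rcoeff, main]
  rw [qNum, eq_div_iff (qsub_ne (N := N))]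
  rw [← hq]
  linear_combination hcoeff


/-- splitting the product over pairs of `Fin (k+1)` -/
lemma pairs_succ_prod {k : ℕ} (F : Fin (k+1) → Fin (k+1) → Kn N) :
    ∏ r ∈ pairs (k+1), F r.1 r.2
      = (∏ j : Fin k, F 0 j.succ) * ∏ r ∈ pairs k, F r.1.succ r.2.succ := by
  classical
  rw [← Finset.prod_filter_mul_prod_filter_not (pairs (k+1)) (fun r => r.1 = 0)
    (fun r => F r.1 r.2)]
  congr 1
  · refine (Finset.prod_nbij (fun (j : Fin k) => ((0 : Fin (k+1)), j.succ)) ?_ ?_ ?_ ?_).symm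
    · intro j _
      rw [Finset.mem_filter, pairs, Finset.mem_filter]
      exact ⟨⟨Finset.mem_univ _, Fin.succ_pos j⟩, rfl⟩
    · intro a _ b _ hab
      simpa [Fin.succ_inj] using hab
    · intro r hr
      simp only [Finset.coe_filter, Set.mem_setOf_eq, pairs, Finset.mem_filter] at hr
      obtain ⟨j, hj⟩ := Fin.exists_succ_eq_of_ne_zero (x := r.2)
        (by intro h0; rw [hr.2, h0] at hr; exact absurd hr.1.2 (lt_irrefl _))
      refine ⟨j, by simp, ?_⟩
      simp only [hj]
      rw [← hr.2]
    · intro j _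
      rfl
  · refine (Finset.prod_nbij (fun (r : Fin k × Fin k) => (r.1.succ, r.2.succ)) ?_ ?_ ?_ ?_).symm
    · intro r hr
      rw [pairs, Finset.mem_filter] at hr
      rw [Finset.mem_filter, pairs, Finset.mem_filter]
      refine ⟨⟨Finset.mem_univ _, ?_⟩, Fin.succ_ne_zero r.1⟩
      rw [Fin.succ_lt_succ_iff]; exact hr.2
    · intro a _ b _ hab
      simp only [Prod.mk.injEq, Fin.succ_inj] at hab
      exact Prod.ext hab.1 hab.2
    · intro r hr
      simp only [Finset.coe_filter, Set.mem_setOf_eq, pairs, Finset.mem_filter] at hr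
      obtain ⟨i, hi⟩ := Fin.exists_succ_eq_of_ne_zero (x := r.1) hr.2
      obtain ⟨j, hj⟩ := Fin.exists_succ_eq_of_ne_zero (x := r.2)
        (by intro h0; rw [h0] at hr; exact absurd (Fin.pos_iff_ne_zero.mp
          (lt_trans (Fin.pos_iff_ne_zero.mpr hr.2) hr.1.2)) (fun hh => hh rfl))
      refine ⟨(i, j), ?_, ?_⟩
      · simp only [Finset.mem_coe, pairs, Finset.mem_filter]
        refine ⟨Finset.mem_univ _, ?_⟩
        rw [← Fin.succ_lt_succ_iff, hi, hj]
        exact hr.1.2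
      · simp only [hi, hj]
    · intro r _
      rfl

/-- sum over permutations, general embedding: Lemma B -/
lemma sumB (k : ℕ) : ∀ (E : Fin k ↪ Fin N),
    ∑ σ : Equiv.Perm (Fin k), ∏ p ∈ pairs k, ff (E (σ p.1)) (E (σ p.2)) = qFact N k := by
  induction k with
  | zero =>
    intro E
    have hp : pairs 0 = ∅ := rfl
    rw [hp]
    simp [qFact]
  | succ k IH =>
    intro E
    rw [← Equiv.sum_comp (Equiv.Perm.decomposeFin.symm)
      (fun σ : Equiv.Perm (Fin (k+1)) => ∏ p ∈ pairs (k+1), ff (E (σ p.1)) (E (σ p.2))),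
      Fintype.sum_prod_type]
    -- the injection `w p`
    have hwinj : ∀ p : Fin (k+1), Function.Injective
        (fun m : Fin k => Equiv.swap (0 : Fin (k+1)) p m.succ) := by
      intro p a b hab
      simp only at hab
      exact Fin.succ_injective _ ((Equiv.swap 0 p).injective hab)
    have hcalc : ∀ p : Fin (k+1),
        ∑ e : Equiv.Perm (Fin k), ∏ r ∈ pairs (k+1),
          ff (E ((Equiv.Perm.decomposeFin.symm (p, e)) r.1))
             (E ((Equiv.Perm.decomposeFin.symm (p, e)) r.2))
        = (∏ m ∈ Finset.univ.erase p, ff (E p) (E m)) * qFact N k := by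
      intro p
      set w : Fin k → Fin (k+1) := fun m => Equiv.swap (0 : Fin (k+1)) p m.succ with hw
      have hstep : ∀ e : Equiv.Perm (Fin k),
          ∏ r ∈ pairs (k+1),
            ff (E ((Equiv.Perm.decomposeFin.symm (p, e)) r.1))
               (E ((Equiv.Perm.decomposeFin.symm (p, e)) r.2))
          = (∏ j : Fin k, ff (E p) (E (w j))) *
            ∏ r ∈ pairs k, ff (E (w (e r.1))) (E (w (e r.2))) := by
        intro e
        rw [pairs_succ_prod (fun a b =>
          ff (E ((Equiv.Perm.decomposeFin.symm (p, e)) a))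
             (E ((Equiv.Perm.decomposeFin.symm (p, e)) b)))]
        congr 1
        · rw [← Equiv.prod_comp e (fun j => ff (E p) (E (w j)))]
          refine Finset.prod_congr rfl fun j _ => ?_
          rw [Equiv.Perm.decomposeFin_symm_apply_zero, Equiv.Perm.decomposeFin_symm_apply_succ]
        · refine Finset.prod_congr rfl fun r _ => ?_
          rw [Equiv.Perm.decomposeFin_symm_apply_succ, Equiv.Perm.decomposeFin_symm_apply_succ]
      rw [Finset.sum_congr rfl (fun e _ => hstep e), ← Finset.mul_sum]
      congr 1
      · -- reindex the univ product over `w` to a product over `erase p`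
        refine Finset.prod_nbij w ?_ ?_ ?_ ?_
        · intro j _
          rw [Finset.mem_erase]
          refine ⟨?_, Finset.mem_univ _⟩
          rw [hw]
          intro hc
          have := (Equiv.swap (0 : Fin (k+1)) p).injective
            (hc.trans (Equiv.swap_apply_left (0 : Fin (k+1)) p).symm)
          exact Fin.succ_ne_zero j this
        · intro a _ b _ hab
          exact hwinj p hab
        · intro m hm
          rw [Finset.mem_coe, Finset.mem_erase] at hm
          have hm0 : Equiv.swap (0 : Fin (k+1)) p m ≠ 0 := fun hc => hm.1
            ((Equiv.swap (0 : Fin (k+1)) p).injective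
              (hc.trans (Equiv.swap_apply_right (0 : Fin (k+1)) p).symm))
          obtain ⟨j, hj⟩ := Fin.exists_succ_eq_of_ne_zero hm0
          refine ⟨j, by simp, ?_⟩
          rw [hw]
          simp only
          rw [hj, Equiv.swap_apply_self]
        · intro j _
          rfl
      · -- apply IH to the composite embedding
        have := IH ⟨fun m => E (w m), fun a b hab => hwinj p (E.injective hab)⟩
        exact this

    rw [Finset.sum_congr rfl (fun p _ => hcalc p), ← Finset.sum_mul, star k E, qFact, qFact,
      Finset.prod_range_succ, mul_comm]

end Aux

open Aux in
theorem statement7 (n : ℕ) (G : Kn n) (hG : ∀ σ : Equiv.Perm (Fin n), act σ G = G) :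
    ((n.factorial : Kn n))⁻¹ * symQ ((varpi n)⁻¹ * G) = (qFact n n)⁻¹ * symQ G := by
  classical
  have hfact_ne : ((n.factorial : ℕ) : Kn n) ≠ 0 :=
    Nat.cast_ne_zero.mpr (Nat.factorial_ne_zero n)
  have hvar_ne : varpi n ≠ 0 := by
    rw [varpi_eq]
    refine Finset.prod_ne_zero_iff.mpr fun p hp => ?_
    rw [pairs, Finset.mem_filter] at hp
    exact ff_ne (ne_of_lt hp.2)
  have hcoc_ne : ∀ σ : Equiv.Perm (Fin n), coc σ ≠ 0 := by
    intro σ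
    rw [coc_eq]
    refine Finset.prod_ne_zero_iff.mpr fun p hp => ?_
    rw [Finset.mem_filter] at hp
    exact gg_ne (ne_of_lt hp.2)
  have hsumvar : ∑ σ : Equiv.Perm (Fin n), act σ (varpi n) = qFact n n := by
    have h := sumB (N := n) n (Function.Embedding.refl (Fin n))
    rw [← h]
    exact Finset.sum_congr rfl fun σ _ => (act_varpi_eq σ).trans rfl
  have hsumcoc : ∑ σ : Equiv.Perm (Fin n), coc σ = qFact n n * (varpi n)⁻¹ := by
    rw [← hsumvar, Finset.sum_mul]
    refine Finset.sum_congr rfl fun σ _ => ?_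
    rw [act_varpi, mul_assoc, mul_inv_cancel₀ hvar_ne, mul_one]
  have hterm : ∀ σ : Equiv.Perm (Fin n), piAct σ ((varpi n)⁻¹ * G) = (varpi n)⁻¹ * G := by
    intro σ
    rw [piAct, map_mul, map_inv₀, act_varpi, hG σ, ← mul_assoc, mul_inv, ← mul_assoc,
      mul_inv_cancel₀ (hcoc_ne σ), one_mul]
  have hL : symQ ((varpi n)⁻¹ * G) = ((n.factorial : ℕ) : Kn n) * ((varpi n)⁻¹ * G) := by
    rw [symQ, Finset.sum_congr rfl (fun σ _ => hterm σ), Finset.sum_const, Finset.card_univ,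
      Fintype.card_perm, Fintype.card_fin, nsmul_eq_mul]
  have hR : symQ G = qFact n n * (varpi n)⁻¹ * G := by
    rw [symQ, Finset.sum_congr rfl (fun σ _ => by rw [piAct, hG σ]), ← Finset.sum_mul, hsumcoc]
  rw [hL, hR, inv_mul_cancel_left₀ hfact_ne, mul_assoc (qFact n n),
    inv_mul_cancel_left₀ (qFact_ne (N := n) n)]
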